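/- Let V be a finite set and let E be a set of elementary triplets over V satisfying ci0, ci1 and ci3. Then the independence model m(E) satisfies CI3: for all pairwise disjoint I,J,K,L ⊆ V, if I⊥J|L ∈ m(E) and I⊥K|L ∈ m(E), then I⊥J|K∪L ∈ m(E) and I⊥K|J∪L ∈ m(E). -/
import Mathlib


variable {V : Type*} [DecidableEq V]

/-- CI3 (composition): for all pairwise disjoint `I J K L`,
`(I ⊥ J | L ∈ M and I ⊥ K | L ∈ M) → (I ⊥ J | K ∪ L ∈ M and I ⊥ K | J ∪ L ∈ M)`. -/
def CI3 (M : Set (Finset V × Finset V × Finset V)) : Prop :=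
  ∀ I J K L : Finset V, Disjoint I J → Disjoint I K → Disjoint I L →
    Disjoint J K → Disjoint J L → Disjoint K L →
    ((I, J, L) ∈ M ∧ (I, K, L) ∈ M) → ((I, J, K ∪ L) ∈ M ∧ (I, K, J ∪ L) ∈ M)

/-- ci0: for all distinct `i j` and `L ⊆ V \ {i, j}`, `i ⊥ j | L ∈ E ↔ j ⊥ i | L ∈ E`. -/
def ci0 (E : Set (V × V × Finset V)) : Prop :=
  ∀ (i j : V) (L : Finset V), i ≠ j → i ∉ L → j ∉ L →
    ((i, j, L) ∈ E ↔ (j, i, L) ∈ E)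

/-- ci1: for all distinct `i j k` and `L ⊆ V \ {i, j, k}`,
`(i ⊥ j | {k} ∪ L ∈ E and i ⊥ k | L ∈ E) ↔ (i ⊥ k | {j} ∪ L ∈ E and i ⊥ j | L ∈ E)`. -/
def ci1 (E : Set (V × V × Finset V)) : Prop :=
  ∀ (i j k : V) (L : Finset V), i ≠ j → i ≠ k → j ≠ k → i ∉ L → j ∉ L → k ∉ L →
    (((i, j, insert k L) ∈ E ∧ (i, k, L) ∈ E) ↔
      ((i, k, insert j L) ∈ E ∧ (i, j, L) ∈ E))

/-- ci3: for all distinct `i j k` and `L ⊆ V \ {i, j, k}`,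
`(i ⊥ j | L ∈ E and i ⊥ k | L ∈ E) → (i ⊥ j | {k} ∪ L ∈ E and i ⊥ k | {j} ∪ L ∈ E)`. -/
def ci3 (E : Set (V × V × Finset V)) : Prop :=
  ∀ (i j k : V) (L : Finset V), i ≠ j → i ≠ k → j ≠ k → i ∉ L → j ∉ L → k ∉ L →
    ((i, j, L) ∈ E ∧ (i, k, L) ∈ E) →
      ((i, j, insert k L) ∈ E ∧ (i, k, insert j L) ∈ E)

/-- `m(E)`: the triplets `I ⊥ J | K` (with `I`, `J`, `K` pairwise disjoint) such that
`i ⊥ j | M' ∈ E` for all `i ∈ I`, `j ∈ J` and all `M'` with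
`K ⊆ M' ⊆ (I \ {i}) ∪ (J \ {j}) ∪ K`. -/
def mMap (E : Set (V × V × Finset V)) : Set (Finset V × Finset V × Finset V) :=
  { T | Disjoint T.1 T.2.1 ∧ Disjoint T.1 T.2.2 ∧ Disjoint T.2.1 T.2.2 ∧
      ∀ i ∈ T.1, ∀ j ∈ T.2.1, ∀ M' : Finset V, T.2.2 ⊆ M' →
        M' ⊆ T.1.erase i ∪ T.2.1.erase j ∪ T.2.2 → (i, j, M') ∈ E }

lemma mMap_key {E : Set (V × V × Finset V)} (h3 : ci3 E) {i : V} {I J K L : Finset V}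
    (hiI : i ∈ I) (hIJ : Disjoint I J) (hIK : Disjoint I K) (hIL : Disjoint I L)
    (hJL : Disjoint J L) (hKL : Disjoint K L)
    (hP : ∀ j ∈ J, ∀ M : Finset V, L ⊆ M → M ⊆ I.erase i ∪ J.erase j ∪ L → (i, j, M) ∈ E)
    (hQ : ∀ k ∈ K, ∀ M : Finset V, L ⊆ M → M ⊆ I.erase i ∪ K.erase k ∪ L → (i, k, M) ∈ E) :
    ∀ (n : ℕ) (M : Finset V), (M ∩ (J ∪ K)).card = n → L ⊆ M →
      M ⊆ I.erase i ∪ J ∪ K ∪ L → ∀ x ∈ J ∪ K, x ∉ M → (i, x, M) ∈ E := by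
  intro n
  induction n using Nat.strong_induction_on with
  | _ n ih =>
    intro M hcard hLM hMsub x hx hxM
    have hinotJKL : i ∉ J ∪ K ∪ L := by
      simp only [Finset.mem_union, not_or]
      exact ⟨⟨Finset.disjoint_left.mp hIJ hiI, Finset.disjoint_left.mp hIK hiI⟩,
        Finset.disjoint_left.mp hIL hiI⟩
    have hiM : i ∉ M := by
      intro h
      have := hMsub h
      simp only [Finset.mem_union, Finset.mem_erase] at this hinotJKL
      tauto
    have hix : i ≠ x := by
      rintro rfl
      simp only [Finset.mem_union, not_or] at hinotJKL
      rcases Finset.mem_union.mp hx with h | h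
      · exact hinotJKL.1.1 h
      · exact hinotJKL.1.2 h
    rcases (M ∩ (J ∪ K)).eq_empty_or_nonempty with hemp | ⟨y, hy⟩
    · -- base case: no elements of J ∪ K in M
      have hMIL : ∀ a ∈ M, a ∈ I.erase i ∪ L := by
        intro a ha
        have h1 := hMsub ha
        have h2 : a ∉ J ∪ K := by
          intro h
          have : a ∈ M ∩ (J ∪ K) := Finset.mem_inter.mpr ⟨ha, h⟩
          simp [hemp] at this
        simp only [Finset.mem_union, not_or] at h1 h2 ⊢
        tauto
      rcases Finset.mem_union.mp hx with hxJ | hxK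
      · refine hP x hxJ M hLM ?_
        intro a ha
        have := hMIL a ha
        simp only [Finset.mem_union] at this ⊢
        tauto
      · refine hQ x hxK M hLM ?_
        intro a ha
        have := hMIL a ha
        simp only [Finset.mem_union] at this ⊢
        tauto
    · -- inductive step: remove some y ∈ M ∩ (J ∪ K)
      obtain ⟨hyM, hyJK⟩ := Finset.mem_inter.mp hy
      set M₀ := M.erase y with hM₀
      have hyL : y ∉ L := by
        rcases Finset.mem_union.mp hyJK with h | h
        · exact Finset.disjoint_left.mp hJL h
        · exact Finset.disjoint_left.mp hKL h
      have hLM₀ : L ⊆ M₀ := Finset.subset_erase.mpr ⟨hLM, hyL⟩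
      have hM₀M : M₀ ⊆ M := Finset.erase_subset _ _
      have hM₀sub : M₀ ⊆ I.erase i ∪ J ∪ K ∪ L := hM₀M.trans hMsub
      have hcard' : (M₀ ∩ (J ∪ K)).card < n := by
        have h1 : M₀ ∩ (J ∪ K) = (M ∩ (J ∪ K)).erase y := by
          ext a
          simp only [hM₀, Finset.mem_inter, Finset.mem_erase]
          tauto
        have h2 : 0 < n := hcard ▸ Finset.card_pos.mpr ⟨y, hy⟩
        rw [h1, Finset.card_erase_of_mem hy, hcard]
        omega
      have hxM₀ : x ∉ M₀ := fun h => hxM (hM₀M h)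
      have hyM₀ : y ∉ M₀ := Finset.notMem_erase _ _
      have hiM₀ : i ∉ M₀ := fun h => hiM (hM₀M h)
      have hiy : i ≠ y := fun h => hiM (h ▸ hyM)
      have hxy : x ≠ y := fun h => hxM (h ▸ hyM)
      have hE1 : (i, x, M₀) ∈ E :=
        ih _ hcard' M₀ rfl hLM₀ hM₀sub x hx hxM₀
      have hE2 : (i, y, M₀) ∈ E :=
        ih _ hcard' M₀ rfl hLM₀ hM₀sub y hyJK hyM₀
      have := (h3 i x y M₀ hix hiy hxy hiM₀ hxM₀ hyM₀ ⟨hE1, hE2⟩).1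
      rwa [Finset.insert_erase hyM] at this

/-- If a set `E` of elementary triplets over a finite set `V` satisfies
ci0, ci1 and ci3, then `m(E)` satisfies CI3. -/
theorem mMap_CI3_of_ci013 [Fintype V] (E : Set (V × V × Finset V))
    (hE : ∀ T ∈ E, T.1 ≠ T.2.1 ∧ T.1 ∉ T.2.2 ∧ T.2.1 ∉ T.2.2)
    (h0 : ci0 E) (h1 : ci1 E) (h3 : ci3 E) :
    CI3 (mMap E) := by
  intro I J K L hIJ hIK hIL hJK hJL hKL hmem
  obtain ⟨⟨_, _, _, hPJ⟩, ⟨_, _, _, hPK⟩⟩ := hmem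
  have key : ∀ i ∈ I, ∀ (M : Finset V), L ⊆ M → M ⊆ I.erase i ∪ J ∪ K ∪ L →
      ∀ x ∈ J ∪ K, x ∉ M → (i, x, M) ∈ E := by
    intro i hi M hLM hMsub x hx hxM
    exact mMap_key h3 hi hIJ hIK hIL hJL hKL
      (fun j hj => hPJ i hi j hj) (fun k hk => hPK i hi k hk)
      _ M rfl hLM hMsub x hx hxM
  constructor
  · refine ⟨hIJ, Finset.disjoint_union_right.mpr ⟨hIK, hIL⟩,
      Finset.disjoint_union_right.mpr ⟨hJK, hJL⟩, ?_⟩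
    intro i hi j hj M' hKLM hMsub
    have hjM : j ∉ M' := by
      intro h
      have := hMsub h
      simp only [Finset.mem_union, Finset.mem_erase] at this
      rcases this with (⟨hne, hmem⟩ | ⟨hne, _⟩) | h | h
      · exact Finset.disjoint_left.mp hIJ hmem hj
      · exact hne rfl
      · exact Finset.disjoint_left.mp hJK hj h
      · exact Finset.disjoint_left.mp hJL hj h
    refine key i hi M' (Finset.subset_union_right.trans hKLM) ?_
      j (Finset.mem_union_left _ hj) hjM
    intro a ha
    have := hMsub ha
    simp only [Finset.mem_union, Finset.mem_erase] at this ⊢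
    tauto
  · refine ⟨hIK, Finset.disjoint_union_right.mpr ⟨hIJ, hIL⟩,
      Finset.disjoint_union_right.mpr ⟨hJK.symm, hKL⟩, ?_⟩
    intro i hi k hk M' hJLM hMsub
    have hkM : k ∉ M' := by
      intro h
      have := hMsub h
      simp only [Finset.mem_union, Finset.mem_erase] at this
      rcases this with (⟨hne, hmem⟩ | ⟨hne, _⟩) | h | h
      · exact Finset.disjoint_left.mp hIK hmem hk
      · exact hne rfl
      · exact Finset.disjoint_left.mp hJK h hk
      · exact Finset.disjoint_left.mp hKL hk h
    refine key i hi M' (Finset.subset_union_right.trans hJLM) ?_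
      k (Finset.mem_union_right _ hk) hkM
    intro a ha
    have := hMsub ha
    simp only [Finset.mem_union, Finset.mem_erase] at this ⊢
    tauto
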